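/- Let 𝒳, 𝒴 be types and n a natural number. For all tuples (x, y), (x', y') ∈ (𝒳 × 𝒴)ⁿ (viewing x, x' ∈ 𝒳ⁿ and y, y' ∈ 𝒴ⁿ) with (x, y) ≠ (x', y'), the following are equivalent: (1) (x = x' and y ≠ y') or (y = y' and x ≠ x'); (2) either for every i, ((x_i, y_i) = (x'_i, y'_i) or (x_i = x'_i ∧ y_i ≠ y'_i)), or for every i, ((x_i, y_i) = (x'_i, y'_i) or (y_i = y'_i ∧ x_i ≠ x'_i)). -/
import Mathlib


/-- The graph identity `G(n) = G₁^{∧n} ∪ G₂^{∧n}` used in the proof of Theorem 1: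
for distinct pairs of `n`-tuples `(x, y)` and `(x', y')`, adjacency in the
`n`-instance complementary delivery graph ((`x = x'` and `y ≠ y'`) or (`y = y'`
and `x ≠ x'`)) holds iff adjacency holds in the union of the `n`-fold AND products
of the two single-instance characteristic graphs. -/
theorem complementary_delivery_graph_eq_union_and_products
    {𝒳 𝒴 : Type*} (n : ℕ) (x x' : Fin n → 𝒳) (y y' : Fin n → 𝒴)
    (hne : (x, y) ≠ (x', y')) :
    ((x = x' ∧ y ≠ y') ∨ (y = y' ∧ x ≠ x')) ↔
      ((∀ i : Fin n, (x i = x' i ∧ y i = y' i) ∨ (x i = x' i ∧ y i ≠ y' i)) ∨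
       (∀ i : Fin n, (x i = x' i ∧ y i = y' i) ∨ (y i = y' i ∧ x i ≠ x' i))) := by
  constructor
  · rintro (⟨hx, hy⟩ | ⟨hy, hx⟩)
    · exact Or.inl fun i => by
        by_cases h : y i = y' i
        · exact Or.inl ⟨congrFun hx i, h⟩
        · exact Or.inr ⟨congrFun hx i, h⟩
    · exact Or.inr fun i => by
        by_cases h : x i = x' i
        · exact Or.inl ⟨h, congrFun hy i⟩
        · exact Or.inr ⟨congrFun hy i, h⟩
  · rintro (h | h)
    · have hx : x = x' := funext fun i => ((h i).elim And.left And.left)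
      refine Or.inl ⟨hx, fun hy => hne ?_⟩
      rw [hx, hy]
    · have hy : y = y' := funext fun i => ((h i).elim And.right And.left)
      refine Or.inr ⟨hy, fun hx => hne ?_⟩
      rw [hx, hy]
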